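/- Let Z and M be topological spaces and A ⊆ Z a subset. Then the homotopy link Holink(Z × M, A ×ˢ univ) of the product pair is homotopy equivalent to the product space Holink(Z, A) × M. -/

import Mathlib

open Set unitInterval

/-- The homotopy link of a subset `A` of a topological space `Z`: the set of continuous
paths `γ : [0,1] → Z` with `γ 0 ∈ A` and `γ t ∉ A` for all `t ≠ 0`. -/
def Holink {Z : Type*} [TopologicalSpace Z] (A : Set Z) : Set C(unitInterval, Z) :=
  {γ | γ 0 ∈ A ∧ ∀ t : unitInterval, t ≠ 0 → γ t ∉ A}

section Aux

variable {Z M : Type} [TopologicalSpace Z] [TopologicalSpace M] (A : Set Z)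

lemma mem_prod_univ_iff (x : Z × M) : x ∈ A ×ˢ (univ : Set M) ↔ x.1 ∈ A := by
  simp [Set.mem_prod]

lemma mem_holink_of_fst {γ : C(unitInterval, Z × M)}
    (h : (ContinuousMap.fst.comp γ : C(unitInterval, Z)) ∈ Holink A) :
    γ ∈ Holink (A ×ˢ (univ : Set M)) := by
  refine ⟨(mem_prod_univ_iff A _).2 h.1, fun t ht hA => h.2 t ht ?_⟩
  exact (mem_prod_univ_iff A _).1 hA

lemma fst_mem_holink {γ : C(unitInterval, Z × M)}
    (h : γ ∈ Holink (A ×ˢ (univ : Set M))) :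
    (ContinuousMap.fst.comp γ : C(unitInterval, Z)) ∈ Holink A := by
  refine ⟨(mem_prod_univ_iff A _).1 h.1, fun t ht hA => h.2 t ht ?_⟩
  exact (mem_prod_univ_iff A _).2 hA

/-- Forward map of the homotopy equivalence. -/
def holinkProdToFun :
    C(↥(Holink (A ×ˢ (univ : Set M))), ↥(Holink A) × M) where
  toFun γ := (⟨ContinuousMap.fst.comp γ.1, fst_mem_holink A γ.2⟩, (γ.1 0).2)
  continuous_toFun := by
    refine Continuous.prodMk (Continuous.subtype_mk ?_ _) ?_
    · exact (ContinuousMap.continuous_postcomp _).comp continuous_subtype_val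
    · exact continuous_snd.comp
        ((continuous_eval_const (0 : unitInterval)).comp continuous_subtype_val)

/-- Uncurried inverse map. -/
def holinkProdInvAux : C((↥(Holink A) × M) × unitInterval, Z × M) where
  toFun p := (p.1.1.1 p.2, p.1.2)
  continuous_toFun := by
    refine Continuous.prodMk ?_ (continuous_snd.comp continuous_fst)
    exact continuous_eval.comp
      (((continuous_subtype_val.comp continuous_fst).comp continuous_fst).prodMk continuous_snd)

lemma holinkProdInv_mem (q : ↥(Holink A) × M) :
    (holinkProdInvAux A).curry q ∈ Holink (A ×ˢ (univ : Set M)) := by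
  refine mem_holink_of_fst A ?_
  have : (ContinuousMap.fst.comp ((holinkProdInvAux A).curry q) : C(unitInterval, Z)) = q.1.1 := by
    ext t; rfl
  rw [this]
  exact q.1.2

/-- Inverse map of the homotopy equivalence. -/
def holinkProdInvFun :
    C(↥(Holink A) × M, ↥(Holink (A ×ˢ (univ : Set M)))) where
  toFun q := ⟨(holinkProdInvAux A).curry q, holinkProdInv_mem A q⟩
  continuous_toFun := Continuous.subtype_mk ((holinkProdInvAux A).curry.continuous) _

/-- Multiplication on the unit interval as a continuous map. -/
def mulI : C(unitInterval × unitInterval, unitInterval) where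
  toFun p := ⟨p.1.1 * p.2.1, unitInterval.mul_mem p.1.2 p.2.2⟩
  continuous_toFun := Continuous.subtype_mk
    ((continuous_subtype_val.comp continuous_fst).mul
      (continuous_subtype_val.comp continuous_snd)) _

/-- Uncurried homotopy. -/
def holinkProdHtpyAux :
    C((unitInterval × ↥(Holink (A ×ˢ (univ : Set M)))) × unitInterval, Z × M) where
  toFun p := ((p.1.2.1 p.2).1, (p.1.2.1 (mulI (p.1.1, p.2))).2)
  continuous_toFun := by
    have hval : Continuous fun p : (unitInterval × ↥(Holink (A ×ˢ (univ : Set M)))) × unitInterval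
        => (p.1.2.1 : C(unitInterval, Z × M)) :=
      continuous_subtype_val.comp (continuous_snd.comp continuous_fst)
    refine Continuous.prodMk ?_ ?_
    · exact continuous_fst.comp (continuous_eval.comp (hval.prodMk continuous_snd))
    · refine continuous_snd.comp (continuous_eval.comp (hval.prodMk ?_))
      exact mulI.continuous.comp
        ((continuous_fst.comp continuous_fst).prodMk continuous_snd)

lemma holinkProdHtpy_mem (p : unitInterval × ↥(Holink (A ×ˢ (univ : Set M)))) :
    (holinkProdHtpyAux A).curry p ∈ Holink (A ×ˢ (univ : Set M)) := by
  refine mem_holink_of_fst A ?_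
  have : (ContinuousMap.fst.comp ((holinkProdHtpyAux A).curry p) : C(unitInterval, Z)) =
      ContinuousMap.fst.comp p.2.1 := by ext t; rfl
  rw [this]
  exact fst_mem_holink A p.2.2

/-- The homotopy link of the product pair `(Z × M, A × M)` is homotopy equivalent to
`Holink(Z, A) × M`. -/
theorem holink_prod_homotopyEquiv
    {Z M : Type} [TopologicalSpace Z] [TopologicalSpace M] (A : Set Z) :
    Nonempty
      (ContinuousMap.HomotopyEquiv
        (Holink (A ×ˢ (univ : Set M)))
        (↥(Holink A) × M)) := by
  refine ⟨{ toFun := holinkProdToFun A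
            invFun := holinkProdInvFun A
            left_inv := ⟨{ toFun := ContinuousMap.mk
                              (fun p => ⟨(holinkProdHtpyAux A).curry p, holinkProdHtpy_mem A p⟩)
                              (Continuous.subtype_mk (holinkProdHtpyAux A).curry.continuous _)
                           map_zero_left := ?_
                           map_one_left := ?_ }⟩
            right_inv := ?_ }⟩
  · intro γ
    apply Subtype.ext
    ext t
    · rfl
    · show ((γ : C(unitInterval, Z × M)) (mulI (0, t))).2 =
        ((γ : C(unitInterval, Z × M)) 0).2
      have h0 : mulI (0, t) = 0 := Subtype.ext (by simp [mulI])
      rw [h0]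
  · intro γ
    apply Subtype.ext
    ext t
    · rfl
    · show ((γ : C(unitInterval, Z × M)) (mulI (1, t))).2 =
        ((γ : C(unitInterval, Z × M)) t).2
      have h1 : mulI (1, t) = t := Subtype.ext (by simp [mulI])
      rw [h1]
  · have h : (holinkProdToFun A).comp (holinkProdInvFun A) = ContinuousMap.id (↥(Holink A) × M) := by
      ext q
      · rfl
      · rfl
    rw [h]

end Aux
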